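/- For m ≥ 4 and n ≥ 1, no triangulation T of the grid-covered cylinder graph G_{m,n} contains the complete graph K_4 as an induced subgraph. -/

import Mathlib

/-- The grid-covered cylinder graph `G_{m,n}` on vertices `(i, j)` with level
`i ∈ {0,...,n}` and column `j ∈ {0,...,m-1}`: horizontal edges join `(i, j)` and
`(i, (j+1) mod m)`, vertical edges join `(i, j)` and `(i+1, j)`. -/
def gccg (m n : ℕ) : SimpleGraph (Fin (n + 1) × Fin m) where
  Adj u v := u ≠ v ∧
    ((u.1 = v.1 ∧ ((u.2.val + 1) % m = v.2.val ∨ (v.2.val + 1) % m = u.2.val)) ∨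
     (u.2 = v.2 ∧ (u.1.val + 1 = v.1.val ∨ v.1.val + 1 = u.1.val)))
  symm := by
    constructor
    rintro u v ⟨hne, h | h⟩
    · exact ⟨hne.symm, Or.inl ⟨h.1.symm, h.2.symm⟩⟩
    · exact ⟨hne.symm, Or.inr ⟨h.1.symm, h.2.symm⟩⟩
  loopless := ⟨fun u h => h.1 rfl⟩

/-- The two endpoints (as `(level, column)` pairs) of the chosen diagonal of the cell with
lower-left corner `(i, j)`: `true` selects the diagonal `(i,j)—(i+1,(j+1) mod m)`, and
`false` selects the diagonal `(i+1,j)—(i,(j+1) mod m)`. -/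
def cellDiag (m : ℕ) (b : Bool) (i j : ℕ) : (ℕ × ℕ) × (ℕ × ℕ) :=
  if b then ((i, j), (i + 1, (j + 1) % m)) else ((i + 1, j), (i, (j + 1) % m))

/-- `u` and `v` (as `(level, column)` pairs) are the endpoints of the diagonal added to
some cell, where `d i j = some b` means the cell `(i, j)` gets the diagonal selected by
`b`, and `d i j = none` means the cell `(i, j)` gets no diagonal. -/
def DiagAdj (m n : ℕ) (d : ℕ → ℕ → Option Bool) (u v : ℕ × ℕ) : Prop :=
  ∃ i < n, ∃ j < m, ∃ b : Bool, d i j = some b ∧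
    ((u, v) = cellDiag m b i j ∨ (v, u) = cellDiag m b i j)

/-- The graph obtained from the grid-covered cylinder graph `G_{m,n}` by adding, in each
cell `(i,j)` with `d i j = some b`, the diagonal selected by `b` (cells with
`d i j = none` are left untriangulated). -/
def ptri (m n : ℕ) (d : ℕ → ℕ → Option Bool) : SimpleGraph (Fin (n + 1) × Fin m) where
  Adj u v := (gccg m n).Adj u v ∨ DiagAdj m n d (u.1.val, u.2.val) (v.1.val, v.2.val)
  symm := by
    constructor
    rintro u v (h | ⟨i, hi, j, hj, b, hb, h⟩)
    · exact Or.inl h.symm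
    · exact Or.inr ⟨i, hi, j, hj, b, hb, h.symm⟩
  loopless := by
    constructor
    rintro u (h | ⟨i, hi, j, hj, b, hb, h⟩)
    · exact h.ne rfl
    · rcases h with h | h <;> cases b <;> simp [cellDiag] at h <;> omega

/-- A (full) triangulation of the grid-covered cylinder graph `G_{m,n}`: every cell gets
exactly one diagonal, chosen by `d`. -/
def tri (m n : ℕ) (d : ℕ → ℕ → Bool) : SimpleGraph (Fin (n + 1) × Fin m) :=
  ptri m n (fun i j => some (d i j))

lemma modsucc_eq {m b e : ℕ} (hb : b < m) :
    (b + 1) % m = e ↔ (b + 1 = e ∧ b + 1 < m ∨ b + 1 = m ∧ e = 0) := by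
  rcases Nat.lt_or_ge (b + 1) m with h | h
  · rw [Nat.mod_eq_of_lt h]; omega
  · have h' : b + 1 = m := by omega
    rw [h', Nat.mod_self]; omega

lemma pair_facts {m n : ℕ} {d : ℕ → ℕ → Bool} (hm : 4 ≤ m)
    {u v : Fin (n + 1) × Fin m} (h : (tri m n d).Adj u v) :
    (u.1.val ≤ v.1.val + 1 ∧ v.1.val ≤ u.1.val + 1) ∧
    (u.2.val = v.2.val ∨ u.2.val + 1 = v.2.val ∨ v.2.val + 1 = u.2.val ∨
      u.2.val + 1 = m ∧ v.2.val = 0 ∨ v.2.val + 1 = m ∧ u.2.val = 0) ∧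
    ¬(u.1.val = v.1.val ∧ u.2.val = v.2.val) := by
  have hb : u.2.val < m := u.2.isLt
  have he : v.2.val < m := v.2.isLt
  have h' : (gccg m n).Adj u v ∨
      DiagAdj m n (fun i j => some (d i j)) (u.1.val, u.2.val) (v.1.val, v.2.val) := h
  rcases h' with ⟨hne, ⟨hl, hcol⟩ | ⟨hc, hlev⟩⟩ | ⟨i, hi, j, hj, bb, hbb, hc⟩
  · have hl' := congrArg Fin.val hl
    rcases hcol with hc | hc
    · rw [modsucc_eq hb] at hc; omega
    · rw [modsucc_eq he] at hc; omega
  · have hc' := congrArg Fin.val hc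
    omega
  · cases bb <;> rcases hc with hc | hc <;>
      simp only [cellDiag, if_true, if_false, Bool.false_eq_true, Prod.mk.injEq] at hc <;>
      obtain ⟨⟨e1, e2⟩, e3, e4⟩ := hc
    · have e4' := e4.symm; rw [modsucc_eq hj] at e4'; omega
    · have e4' := e4.symm; rw [modsucc_eq hj] at e4'; omega
    · have e4' := e4.symm; rw [modsucc_eq hj] at e4'; omega
    · have e4' := e4.symm; rw [modsucc_eq hj] at e4'; omega

lemma diag_true {m n : ℕ} {d : ℕ → ℕ → Bool} (hm : 4 ≤ m)
    {u v : Fin (n + 1) × Fin m} (h : (tri m n d).Adj u v)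
    (h1 : u.1.val + 1 = v.1.val)
    (h2 : u.2.val + 1 = v.2.val ∨ u.2.val + 1 = m ∧ v.2.val = 0) :
    d u.1.val u.2.val = true := by
  have hb : u.2.val < m := u.2.isLt
  have he : v.2.val < m := v.2.isLt
  have h' : (gccg m n).Adj u v ∨
      DiagAdj m n (fun i j => some (d i j)) (u.1.val, u.2.val) (v.1.val, v.2.val) := h
  rcases h' with ⟨hne, ⟨hl, hcol⟩ | ⟨hc, hlev⟩⟩ | ⟨i, hi, j, hj, bb, hbb, hc⟩
  · have hl' := congrArg Fin.val hl; omega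
  · have hc' := congrArg Fin.val hc; omega
  · injection hbb with hbb'
    cases bb <;> rcases hc with hc | hc <;>
      simp only [cellDiag, if_true, if_false, Bool.false_eq_true, Prod.mk.injEq] at hc <;>
      obtain ⟨⟨e1, e2⟩, e3, e4⟩ := hc
    · -- false, (u,v) = ((i+1,j),(i,(j+1)%m)) : level contradiction
      omega
    · -- false, (v,u) : u=(i,(j+1)%m), v=(i+1,j) : column contradiction
      have e4' := e4.symm; rw [modsucc_eq hj] at e4'; omega
    · -- true, (u,v) = ((i,j),(i+1,(j+1)%m)) : good case
      rw [e1, e2]; exact hbb'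
    · -- true, (v,u) : level contradiction
      omega

lemma diag_false {m n : ℕ} {d : ℕ → ℕ → Bool} (hm : 4 ≤ m)
    {u v : Fin (n + 1) × Fin m} (h : (tri m n d).Adj u v)
    (h1 : u.1.val + 1 = v.1.val)
    (h2 : v.2.val + 1 = u.2.val ∨ v.2.val + 1 = m ∧ u.2.val = 0) :
    d u.1.val v.2.val = false := by
  have hb : u.2.val < m := u.2.isLt
  have he : v.2.val < m := v.2.isLt
  have h' : (gccg m n).Adj u v ∨
      DiagAdj m n (fun i j => some (d i j)) (u.1.val, u.2.val) (v.1.val, v.2.val) := h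
  rcases h' with ⟨hne, ⟨hl, hcol⟩ | ⟨hc, hlev⟩⟩ | ⟨i, hi, j, hj, bb, hbb, hc⟩
  · have hl' := congrArg Fin.val hl; omega
  · have hc' := congrArg Fin.val hc; omega
  · injection hbb with hbb'
    cases bb <;> rcases hc with hc | hc <;>
      simp only [cellDiag, if_true, if_false, Bool.false_eq_true, Prod.mk.injEq] at hc <;>
      obtain ⟨⟨e1, e2⟩, e3, e4⟩ := hc
    · -- false, (u,v) : level contradiction
      omega
    · -- false, (v,u) : u=(i,(j+1)%m), v=(i+1,j): good case, d i j = false, goal d a e = d i j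
      rw [e3, e2]; exact hbb'
    · -- true, (u,v) = ((i,j),(i+1,(j+1)%m)): column contradiction with h2
      have e4' := e4.symm; rw [modsucc_eq hj] at e4'; omega
    · -- true, (v,u): level contradiction
      omega

lemma three_cols {m x y z : ℕ} (hm : 4 ≤ m) (hx : x < m) (hy : y < m) (hz : z < m)
    (cxy : (x = y ∨ x + 1 = y ∨ y + 1 = x ∨ x + 1 = m ∧ y = 0 ∨ y + 1 = m ∧ x = 0))
    (cxz : (x = z ∨ x + 1 = z ∨ z + 1 = x ∨ x + 1 = m ∧ z = 0 ∨ z + 1 = m ∧ x = 0))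
    (cyz : (y = z ∨ y + 1 = z ∨ z + 1 = y ∨ y + 1 = m ∧ z = 0 ∨ z + 1 = m ∧ y = 0)) :
    x = y ∨ x = z ∨ y = z := by
  omega

lemma cyc_symm {m x y : ℕ} (h : (x = y ∨ x + 1 = y ∨ y + 1 = x ∨ x + 1 = m ∧ y = 0 ∨ y + 1 = m ∧ x = 0)) : (y = x ∨ y + 1 = x ∨ x + 1 = y ∨ y + 1 = m ∧ x = 0 ∨ x + 1 = m ∧ y = 0) := by
  omega

set_option maxHeartbeats 1600000 in
lemma stage_b {m x y z w : ℕ} (hm : 4 ≤ m) (hx : x < m) (hy : y < m) (hz : z < m)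
    (hw : w < m) (hxy : x ≠ y) (hzw : z ≠ w)
    (cxy : (x = y ∨ x + 1 = y ∨ y + 1 = x ∨ x + 1 = m ∧ y = 0 ∨ y + 1 = m ∧ x = 0))
    (cxz : (x = z ∨ x + 1 = z ∨ z + 1 = x ∨ x + 1 = m ∧ z = 0 ∨ z + 1 = m ∧ x = 0))
    (cxw : (x = w ∨ x + 1 = w ∨ w + 1 = x ∨ x + 1 = m ∧ w = 0 ∨ w + 1 = m ∧ x = 0))
    (cyz : (y = z ∨ y + 1 = z ∨ z + 1 = y ∨ y + 1 = m ∧ z = 0 ∨ z + 1 = m ∧ y = 0))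
    (cyw : (y = w ∨ y + 1 = w ∨ w + 1 = y ∨ y + 1 = m ∧ w = 0 ∨ w + 1 = m ∧ y = 0)) :
    ((x + 1 = z ∨ x + 1 = m ∧ z = 0) ∧ (w + 1 = y ∨ w + 1 = m ∧ y = 0) ∧ w = x) ∨
    ((x + 1 = w ∨ x + 1 = m ∧ w = 0) ∧ (z + 1 = y ∨ z + 1 = m ∧ y = 0) ∧ z = x) ∨
    ((y + 1 = z ∨ y + 1 = m ∧ z = 0) ∧ (w + 1 = x ∨ w + 1 = m ∧ x = 0) ∧ w = y) ∨
    ((y + 1 = w ∨ y + 1 = m ∧ w = 0) ∧ (z + 1 = x ∨ z + 1 = m ∧ x = 0) ∧ z = y) := by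
  have t1 := three_cols hm hx hy hz cxy cxz cyz
  have t2 := three_cols hm hx hy hw cxy cxw cyw
  clear cxz cxw cyz cyw
  rcases t1 with e1 | e1 | e1 <;> rcases t2 with e2 | e2 | e2 <;>
    rcases cxy with c | c | c | c | c <;>
    first
    | exact absurd c hxy
    | exact absurd (e1.symm.trans e2) hzw
    | exact Or.inl ⟨by omega, by omega, by omega⟩
    | exact Or.inr (Or.inl ⟨by omega, by omega, by omega⟩)
    | exact Or.inr (Or.inr (Or.inl ⟨by omega, by omega, by omega⟩))
    | exact Or.inr (Or.inr (Or.inr ⟨by omega, by omega, by omega⟩))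

lemma no_three_level {ai aj ak bi bj bk : ℕ} (Dij : ¬(ai = aj ∧ bi = bj))
    (Dik : ¬(ai = ak ∧ bi = bk)) (Djk : ¬(aj = ak ∧ bj = bk))
    (T : bi = bj ∨ bi = bk ∨ bj = bk) : ¬(ai = aj ∧ ai = ak) := by
  omega

set_option maxHeartbeats 1600000 in
lemma stage_a {a0 a1 a2 a3 b0 b1 b2 b3 : ℕ}
    (L01 : a0 ≤ a1 + 1 ∧ a1 ≤ a0 + 1)
    (L02 : a0 ≤ a2 + 1 ∧ a2 ≤ a0 + 1)
    (L03 : a0 ≤ a3 + 1 ∧ a3 ≤ a0 + 1)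
    (L12 : a1 ≤ a2 + 1 ∧ a2 ≤ a1 + 1)
    (L13 : a1 ≤ a3 + 1 ∧ a3 ≤ a1 + 1)
    (L23 : a2 ≤ a3 + 1 ∧ a3 ≤ a2 + 1)
    (D01 : ¬(a0 = a1 ∧ b0 = b1))
    (D02 : ¬(a0 = a2 ∧ b0 = b2))
    (D03 : ¬(a0 = a3 ∧ b0 = b3))
    (D12 : ¬(a1 = a2 ∧ b1 = b2))
    (D13 : ¬(a1 = a3 ∧ b1 = b3))
    (D23 : ¬(a2 = a3 ∧ b2 = b3))
    (T012 : b0 = b1 ∨ b0 = b2 ∨ b1 = b2)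
    (T013 : b0 = b1 ∨ b0 = b3 ∨ b1 = b3)
    (T023 : b0 = b2 ∨ b0 = b3 ∨ b2 = b3)
    (T123 : b1 = b2 ∨ b1 = b3 ∨ b2 = b3) :
    (a0 = a1 ∧ a2 = a3 ∧ a0 + 1 = a2 ∧ b0 ≠ b1 ∧ b2 ≠ b3) ∨
      (a0 = a2 ∧ a1 = a3 ∧ a0 + 1 = a1 ∧ b0 ≠ b2 ∧ b1 ≠ b3) ∨
      (a0 = a3 ∧ a1 = a2 ∧ a0 + 1 = a1 ∧ b0 ≠ b3 ∧ b1 ≠ b2) ∨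
      (a2 = a3 ∧ a0 = a1 ∧ a2 + 1 = a0 ∧ b2 ≠ b3 ∧ b0 ≠ b1) ∨
      (a1 = a3 ∧ a0 = a2 ∧ a1 + 1 = a0 ∧ b1 ≠ b3 ∧ b0 ≠ b2) ∨
      (a1 = a2 ∧ a0 = a3 ∧ a1 + 1 = a0 ∧ b1 ≠ b2 ∧ b0 ≠ b3) := by
  have N012 := no_three_level D01 D02 D12 T012
  have N013 := no_three_level D01 D03 D13 T013
  have N023 := no_three_level D02 D03 D23 T023
  have N123 := no_three_level D12 D13 D23 T123
  have GA0 : (a0 = a1 ∧ a2 = a3 ∧ a0 + 1 = a2) ∨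
      (a0 = a2 ∧ a1 = a3 ∧ a0 + 1 = a1) ∨
      (a0 = a3 ∧ a1 = a2 ∧ a0 + 1 = a1) ∨
      (a2 = a3 ∧ a0 = a1 ∧ a2 + 1 = a0) ∨
      (a1 = a3 ∧ a0 = a2 ∧ a1 + 1 = a0) ∨
      (a1 = a2 ∧ a0 = a3 ∧ a1 + 1 = a0) := by
    clear D01 D02 D03 D12 D13 D23 T012 T013 T023 T123
    have c1 : a1 = a0 ∨ a1 + 1 = a0 ∨ a0 + 1 = a1 := by omega
    have c2 : a2 = a0 ∨ a2 + 1 = a0 ∨ a0 + 1 = a2 := by omega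
    have c3 : a3 = a0 ∨ a3 + 1 = a0 ∨ a0 + 1 = a3 := by omega
    rcases c1 with c1 | c1 | c1 <;> rcases c2 with c2 | c2 | c2 <;>
      rcases c3 with c3 | c3 | c3 <;> omega
  rcases GA0 with h|h|h|h|h|h
  · exact Or.inl ⟨h.1, h.2.1, h.2.2, fun e => D01 ⟨h.1, e⟩, fun e => D23 ⟨h.2.1, e⟩⟩
  · exact Or.inr (Or.inl ⟨h.1, h.2.1, h.2.2, fun e => D02 ⟨h.1, e⟩, fun e => D13 ⟨h.2.1, e⟩⟩)
  · exact Or.inr (Or.inr (Or.inl ⟨h.1, h.2.1, h.2.2, fun e => D03 ⟨h.1, e⟩, fun e => D12 ⟨h.2.1, e⟩⟩))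
  · exact Or.inr (Or.inr (Or.inr (Or.inl ⟨h.1, h.2.1, h.2.2, fun e => D23 ⟨h.1, e⟩, fun e => D01 ⟨h.2.1, e⟩⟩)))
  · exact Or.inr (Or.inr (Or.inr (Or.inr (Or.inl ⟨h.1, h.2.1, h.2.2, fun e => D13 ⟨h.1, e⟩, fun e => D02 ⟨h.2.1, e⟩⟩))))
  · exact Or.inr (Or.inr (Or.inr (Or.inr (Or.inr (⟨h.1, h.2.1, h.2.2, fun e => D12 ⟨h.1, e⟩, fun e => D03 ⟨h.2.1, e⟩⟩)))))


/-- For `m ≥ 4` and `n ≥ 1`, no triangulation of the grid-covered cylinder graph `G_{m,n}`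
contains the complete graph `K 4` as an induced subgraph. -/
theorem tri_gccg_no_K4 (m n : ℕ) (hm : 4 ≤ m) (hn : 1 ≤ n) (d : ℕ → ℕ → Bool) :
    IsEmpty ((⊤ : SimpleGraph (Fin 4)) ↪g tri m n d) := by
  constructor
  intro f
  have hA : ∀ k l : Fin 4, k ≠ l → (tri m n d).Adj (f k) (f l) := fun k l hkl =>
    f.map_rel_iff.mpr ((SimpleGraph.top_adj k l).mpr hkl)
  have P01 := pair_facts hm (hA 0 1 (by decide))
  have P02 := pair_facts hm (hA 0 2 (by decide))
  have P03 := pair_facts hm (hA 0 3 (by decide))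
  have P12 := pair_facts hm (hA 1 2 (by decide))
  have P13 := pair_facts hm (hA 1 3 (by decide))
  have P23 := pair_facts hm (hA 2 3 (by decide))
  have hb0 : ((f 0).2.val) < m := (f 0).2.isLt
  have hb1 : ((f 1).2.val) < m := (f 1).2.isLt
  have hb2 : ((f 2).2.val) < m := (f 2).2.isLt
  have hb3 : ((f 3).2.val) < m := (f 3).2.isLt
  have T012 := three_cols hm hb0 hb1 hb2 P01.2.1 P02.2.1 P12.2.1
  have T013 := three_cols hm hb0 hb1 hb3 P01.2.1 P03.2.1 P13.2.1
  have T023 := three_cols hm hb0 hb2 hb3 P02.2.1 P03.2.1 P23.2.1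
  have T123 := three_cols hm hb1 hb2 hb3 P12.2.1 P13.2.1 P23.2.1
  have HA := stage_a P01.1 P02.1 P03.1 P12.1 P13.1 P23.1
    P01.2.2 P02.2.2 P03.2.2 P12.2.2 P13.2.2 P23.2.2 T012 T013 T023 T123
  rcases HA with h|h|h|h|h|h
  · obtain ⟨h1, h2, h3, h4, h5⟩ := h
    have HB := stage_b hm hb0 hb1 hb2 hb3 h4 h5
      P01.2.1 P02.2.1 P03.2.1 P12.2.1 P13.2.1
    rcases HB with ⟨c2, c4, c6⟩ | ⟨c2, c4, c6⟩ | ⟨c2, c4, c6⟩ | ⟨c2, c4, c6⟩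
    · have t1 := diag_true hm (hA 0 2 (by decide)) h3 c2
      have t2 := diag_false hm (hA 1 3 (by decide)) (by rw [← h1, ← h2]; exact h3 : ((f 1).1.val) + 1 = ((f 3).1.val)) c4
      rw [(h1.symm : ((f 1).1.val) = ((f 0).1.val)), c6, t1] at t2
      exact Bool.noConfusion t2
    · have t1 := diag_true hm (hA 0 3 (by decide)) (by rw [← h2]; exact h3 : ((f 0).1.val) + 1 = ((f 3).1.val)) c2
      have t2 := diag_false hm (hA 1 2 (by decide)) (by rw [← h1]; exact h3 : ((f 1).1.val) + 1 = ((f 2).1.val)) c4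
      rw [(h1.symm : ((f 1).1.val) = ((f 0).1.val)), c6, t1] at t2
      exact Bool.noConfusion t2
    · have t1 := diag_true hm (hA 1 2 (by decide)) (by rw [← h1]; exact h3 : ((f 1).1.val) + 1 = ((f 2).1.val)) c2
      have t2 := diag_false hm (hA 0 3 (by decide)) (by rw [← h2]; exact h3 : ((f 0).1.val) + 1 = ((f 3).1.val)) c4
      rw [(h1 : ((f 0).1.val) = ((f 1).1.val)), c6, t1] at t2
      exact Bool.noConfusion t2
    · have t1 := diag_true hm (hA 1 3 (by decide)) (by rw [← h1, ← h2]; exact h3 : ((f 1).1.val) + 1 = ((f 3).1.val)) c2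
      have t2 := diag_false hm (hA 0 2 (by decide)) h3 c4
      rw [(h1 : ((f 0).1.val) = ((f 1).1.val)), c6, t1] at t2
      exact Bool.noConfusion t2
  · obtain ⟨h1, h2, h3, h4, h5⟩ := h
    have HB := stage_b hm hb0 hb2 hb1 hb3 h4 h5
      P02.2.1 P01.2.1 P03.2.1 (cyc_symm P12.2.1) P23.2.1
    rcases HB with ⟨c2, c4, c6⟩ | ⟨c2, c4, c6⟩ | ⟨c2, c4, c6⟩ | ⟨c2, c4, c6⟩
    · have t1 := diag_true hm (hA 0 1 (by decide)) h3 c2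
      have t2 := diag_false hm (hA 2 3 (by decide)) (by rw [← h1, ← h2]; exact h3 : ((f 2).1.val) + 1 = ((f 3).1.val)) c4
      rw [(h1.symm : ((f 2).1.val) = ((f 0).1.val)), c6, t1] at t2
      exact Bool.noConfusion t2
    · have t1 := diag_true hm (hA 0 3 (by decide)) (by rw [← h2]; exact h3 : ((f 0).1.val) + 1 = ((f 3).1.val)) c2
      have t2 := diag_false hm (hA 2 1 (by decide)) (by rw [← h1]; exact h3 : ((f 2).1.val) + 1 = ((f 1).1.val)) c4
      rw [(h1.symm : ((f 2).1.val) = ((f 0).1.val)), c6, t1] at t2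
      exact Bool.noConfusion t2
    · have t1 := diag_true hm (hA 2 1 (by decide)) (by rw [← h1]; exact h3 : ((f 2).1.val) + 1 = ((f 1).1.val)) c2
      have t2 := diag_false hm (hA 0 3 (by decide)) (by rw [← h2]; exact h3 : ((f 0).1.val) + 1 = ((f 3).1.val)) c4
      rw [(h1 : ((f 0).1.val) = ((f 2).1.val)), c6, t1] at t2
      exact Bool.noConfusion t2
    · have t1 := diag_true hm (hA 2 3 (by decide)) (by rw [← h1, ← h2]; exact h3 : ((f 2).1.val) + 1 = ((f 3).1.val)) c2
      have t2 := diag_false hm (hA 0 1 (by decide)) h3 c4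
      rw [(h1 : ((f 0).1.val) = ((f 2).1.val)), c6, t1] at t2
      exact Bool.noConfusion t2
  · obtain ⟨h1, h2, h3, h4, h5⟩ := h
    have HB := stage_b hm hb0 hb3 hb1 hb2 h4 h5
      P03.2.1 P01.2.1 P02.2.1 (cyc_symm P13.2.1) (cyc_symm P23.2.1)
    rcases HB with ⟨c2, c4, c6⟩ | ⟨c2, c4, c6⟩ | ⟨c2, c4, c6⟩ | ⟨c2, c4, c6⟩
    · have t1 := diag_true hm (hA 0 1 (by decide)) h3 c2
      have t2 := diag_false hm (hA 3 2 (by decide)) (by rw [← h1, ← h2]; exact h3 : ((f 3).1.val) + 1 = ((f 2).1.val)) c4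
      rw [(h1.symm : ((f 3).1.val) = ((f 0).1.val)), c6, t1] at t2
      exact Bool.noConfusion t2
    · have t1 := diag_true hm (hA 0 2 (by decide)) (by rw [← h2]; exact h3 : ((f 0).1.val) + 1 = ((f 2).1.val)) c2
      have t2 := diag_false hm (hA 3 1 (by decide)) (by rw [← h1]; exact h3 : ((f 3).1.val) + 1 = ((f 1).1.val)) c4
      rw [(h1.symm : ((f 3).1.val) = ((f 0).1.val)), c6, t1] at t2
      exact Bool.noConfusion t2
    · have t1 := diag_true hm (hA 3 1 (by decide)) (by rw [← h1]; exact h3 : ((f 3).1.val) + 1 = ((f 1).1.val)) c2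
      have t2 := diag_false hm (hA 0 2 (by decide)) (by rw [← h2]; exact h3 : ((f 0).1.val) + 1 = ((f 2).1.val)) c4
      rw [(h1 : ((f 0).1.val) = ((f 3).1.val)), c6, t1] at t2
      exact Bool.noConfusion t2
    · have t1 := diag_true hm (hA 3 2 (by decide)) (by rw [← h1, ← h2]; exact h3 : ((f 3).1.val) + 1 = ((f 2).1.val)) c2
      have t2 := diag_false hm (hA 0 1 (by decide)) h3 c4
      rw [(h1 : ((f 0).1.val) = ((f 3).1.val)), c6, t1] at t2
      exact Bool.noConfusion t2
  · obtain ⟨h1, h2, h3, h4, h5⟩ := h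
    have HB := stage_b hm hb2 hb3 hb0 hb1 h4 h5
      P23.2.1 (cyc_symm P02.2.1) (cyc_symm P12.2.1) (cyc_symm P03.2.1) (cyc_symm P13.2.1)
    rcases HB with ⟨c2, c4, c6⟩ | ⟨c2, c4, c6⟩ | ⟨c2, c4, c6⟩ | ⟨c2, c4, c6⟩
    · have t1 := diag_true hm (hA 2 0 (by decide)) h3 c2
      have t2 := diag_false hm (hA 3 1 (by decide)) (by rw [← h1, ← h2]; exact h3 : ((f 3).1.val) + 1 = ((f 1).1.val)) c4
      rw [(h1.symm : ((f 3).1.val) = ((f 2).1.val)), c6, t1] at t2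
      exact Bool.noConfusion t2
    · have t1 := diag_true hm (hA 2 1 (by decide)) (by rw [← h2]; exact h3 : ((f 2).1.val) + 1 = ((f 1).1.val)) c2
      have t2 := diag_false hm (hA 3 0 (by decide)) (by rw [← h1]; exact h3 : ((f 3).1.val) + 1 = ((f 0).1.val)) c4
      rw [(h1.symm : ((f 3).1.val) = ((f 2).1.val)), c6, t1] at t2
      exact Bool.noConfusion t2
    · have t1 := diag_true hm (hA 3 0 (by decide)) (by rw [← h1]; exact h3 : ((f 3).1.val) + 1 = ((f 0).1.val)) c2
      have t2 := diag_false hm (hA 2 1 (by decide)) (by rw [← h2]; exact h3 : ((f 2).1.val) + 1 = ((f 1).1.val)) c4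
      rw [(h1 : ((f 2).1.val) = ((f 3).1.val)), c6, t1] at t2
      exact Bool.noConfusion t2
    · have t1 := diag_true hm (hA 3 1 (by decide)) (by rw [← h1, ← h2]; exact h3 : ((f 3).1.val) + 1 = ((f 1).1.val)) c2
      have t2 := diag_false hm (hA 2 0 (by decide)) h3 c4
      rw [(h1 : ((f 2).1.val) = ((f 3).1.val)), c6, t1] at t2
      exact Bool.noConfusion t2
  · obtain ⟨h1, h2, h3, h4, h5⟩ := h
    have HB := stage_b hm hb1 hb3 hb0 hb2 h4 h5
      P13.2.1 (cyc_symm P01.2.1) P12.2.1 (cyc_symm P03.2.1) (cyc_symm P23.2.1)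
    rcases HB with ⟨c2, c4, c6⟩ | ⟨c2, c4, c6⟩ | ⟨c2, c4, c6⟩ | ⟨c2, c4, c6⟩
    · have t1 := diag_true hm (hA 1 0 (by decide)) h3 c2
      have t2 := diag_false hm (hA 3 2 (by decide)) (by rw [← h1, ← h2]; exact h3 : ((f 3).1.val) + 1 = ((f 2).1.val)) c4
      rw [(h1.symm : ((f 3).1.val) = ((f 1).1.val)), c6, t1] at t2
      exact Bool.noConfusion t2
    · have t1 := diag_true hm (hA 1 2 (by decide)) (by rw [← h2]; exact h3 : ((f 1).1.val) + 1 = ((f 2).1.val)) c2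
      have t2 := diag_false hm (hA 3 0 (by decide)) (by rw [← h1]; exact h3 : ((f 3).1.val) + 1 = ((f 0).1.val)) c4
      rw [(h1.symm : ((f 3).1.val) = ((f 1).1.val)), c6, t1] at t2
      exact Bool.noConfusion t2
    · have t1 := diag_true hm (hA 3 0 (by decide)) (by rw [← h1]; exact h3 : ((f 3).1.val) + 1 = ((f 0).1.val)) c2
      have t2 := diag_false hm (hA 1 2 (by decide)) (by rw [← h2]; exact h3 : ((f 1).1.val) + 1 = ((f 2).1.val)) c4
      rw [(h1 : ((f 1).1.val) = ((f 3).1.val)), c6, t1] at t2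
      exact Bool.noConfusion t2
    · have t1 := diag_true hm (hA 3 2 (by decide)) (by rw [← h1, ← h2]; exact h3 : ((f 3).1.val) + 1 = ((f 2).1.val)) c2
      have t2 := diag_false hm (hA 1 0 (by decide)) h3 c4
      rw [(h1 : ((f 1).1.val) = ((f 3).1.val)), c6, t1] at t2
      exact Bool.noConfusion t2
  · obtain ⟨h1, h2, h3, h4, h5⟩ := h
    have HB := stage_b hm hb1 hb2 hb0 hb3 h4 h5
      P12.2.1 (cyc_symm P01.2.1) P13.2.1 (cyc_symm P02.2.1) P23.2.1
    rcases HB with ⟨c2, c4, c6⟩ | ⟨c2, c4, c6⟩ | ⟨c2, c4, c6⟩ | ⟨c2, c4, c6⟩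
    · have t1 := diag_true hm (hA 1 0 (by decide)) h3 c2
      have t2 := diag_false hm (hA 2 3 (by decide)) (by rw [← h1, ← h2]; exact h3 : ((f 2).1.val) + 1 = ((f 3).1.val)) c4
      rw [(h1.symm : ((f 2).1.val) = ((f 1).1.val)), c6, t1] at t2
      exact Bool.noConfusion t2
    · have t1 := diag_true hm (hA 1 3 (by decide)) (by rw [← h2]; exact h3 : ((f 1).1.val) + 1 = ((f 3).1.val)) c2
      have t2 := diag_false hm (hA 2 0 (by decide)) (by rw [← h1]; exact h3 : ((f 2).1.val) + 1 = ((f 0).1.val)) c4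
      rw [(h1.symm : ((f 2).1.val) = ((f 1).1.val)), c6, t1] at t2
      exact Bool.noConfusion t2
    · have t1 := diag_true hm (hA 2 0 (by decide)) (by rw [← h1]; exact h3 : ((f 2).1.val) + 1 = ((f 0).1.val)) c2
      have t2 := diag_false hm (hA 1 3 (by decide)) (by rw [← h2]; exact h3 : ((f 1).1.val) + 1 = ((f 3).1.val)) c4
      rw [(h1 : ((f 1).1.val) = ((f 2).1.val)), c6, t1] at t2
      exact Bool.noConfusion t2
    · have t1 := diag_true hm (hA 2 3 (by decide)) (by rw [← h1, ← h2]; exact h3 : ((f 2).1.val) + 1 = ((f 3).1.val)) c2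
      have t2 := diag_false hm (hA 1 0 (by decide)) h3 c4
      rw [(h1 : ((f 1).1.val) = ((f 2).1.val)), c6, t1] at t2
      exact Bool.noConfusion t2
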